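/- Let G be a totally duplicated genome consisting of a single linear chromosome with n distinct markers, and let C be the number of cycles of the natural graph NG(G). Then the minimal number of DCJ operations transforming G into a 1-tandem duplicated genome satisfies d^t_DCJ(G) ≥ n − C − 1. -/

import Mathlib

namespace Rearr

/-- A marker occurrence: gene identifier and paralog copy flag. -/
abbrev Occ : Type := ℕ × Bool

/-- An extremity of a marker occurrence (`true` = head, `false` = tail). -/
abbrev Ext : Type := Occ × Bool

/-- The paralogous extremity: other copy, same end. -/
def flipCopy (e : Ext) : Ext := ((e.1.1, !e.1.2), e.2)

/-- The paralogous opposite extremity: other copy, other end. -/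
def coFlip (e : Ext) : Ext := ((e.1.1, !e.1.2), !e.2)

/-- A genome: a finite set of marker occurrences together with a set of
adjacencies, i.e. a partial matching on the extremities of the occurrences.
Unmatched extremities are telomeres; an adjacency is an unordered pair of
extremities, so that the adjacencies `(x y)` and `(−y −x)` are identified. -/
structure Genome where
  occs : Finset Occ
  adj : Finset (Sym2 Ext)

namespace Genome

/-- Well-formedness of a genome: adjacencies only involve extremities of
present occurrences, and every extremity lies in at most one adjacency. -/
def WF (G : Genome) : Prop :=
  (∀ p ∈ G.adj, ∀ e ∈ p, (e : Ext).1 ∈ G.occs) ∧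
  ∀ p ∈ G.adj, ∀ q ∈ G.adj, ∀ e : Ext, e ∈ p → e ∈ q → p = q

def matched (G : Genome) (e : Ext) : Prop := ∃ p ∈ G.adj, e ∈ p

/-- `e` is a telomere of `G`. -/
def telo (G : Genome) (e : Ext) : Prop := e.1 ∈ G.occs ∧ ¬ G.matched e

/-- a non-duplicated genome: no marker is duplicated. -/
def NonDup (G : Genome) : Prop :=
  ∀ g : ℕ, ¬ (((g, true) : Occ) ∈ G.occs ∧ ((g, false) : Occ) ∈ G.occs)

/-- a totally duplicated genome: every marker appears exactly twice. -/
def TotDup (G : Genome) : Prop :=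
  ∀ g : ℕ, ∀ c : Bool, ((g, c) : Occ) ∈ G.occs → ((g, !c) : Occ) ∈ G.occs

/-- the marker `g` is duplicated in `G`. -/
def DupGene (G : Genome) (g : ℕ) : Prop :=
  ((g, true) : Occ) ∈ G.occs ∧ ((g, false) : Occ) ∈ G.occs

/-- number of distinct markers (genes). -/
def numGenes (G : Genome) : ℕ := (G.occs.image Prod.fst).card

/-- A dedoubled genome: each duplicated marker `x` forms a doublet
`(x x̄)` or `(x̄ x)`. -/
def Dedoubled (G : Genome) : Prop :=
  ∀ g : ℕ, G.DupGene g →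
    ∃ c : Bool, s((((g, c), true) : Ext), (((g, !c), false) : Ext)) ∈ G.adj

/-- Two extremities lie in the same chromosome of `G`. -/
def chromRel (G : Genome) (e f : Ext) : Prop :=
  Relation.EqvGen (fun e f => s(e, f) ∈ G.adj ∨ (e.1 = f.1 ∧ e.1 ∈ G.occs)) e f

/-- `G` consists of a single linear chromosome. -/
def Unilinear (G : Genome) : Prop :=
  G.occs.Nonempty ∧ (∀ e f : Ext, e.1 ∈ G.occs → f.1 ∈ G.occs → G.chromRel e f) ∧
  ∃ e : Ext, G.telo e

/-- `G` consists of a single circular chromosome. -/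
def Unicircular (G : Genome) : Prop :=
  G.occs.Nonempty ∧ (∀ e f : Ext, e.1 ∈ G.occs → f.1 ∈ G.occs → G.chromRel e f) ∧
  ∀ e : Ext, ¬ G.telo e

end Genome

/-- A DCJ operation: cut two adjacencies of the genome and rejoin the four
exposed extremities in any possible way (including the degenerate variants
involving telomeres). -/
def IsDCJ (G G' : Genome) : Prop :=
  G.WF ∧ G'.WF ∧ G.occs = G'.occs ∧
  ((∃ a b c d : Ext, s(a, b) ∈ G.adj ∧ s(c, d) ∈ G.adj ∧ s(a, b) ≠ s(c, d) ∧
      (G'.adj = insert s(a, c) (insert s(b, d) ((G.adj.erase s(a, b)).erase s(c, d))) ∨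
       G'.adj = insert s(a, d) (insert s(b, c) ((G.adj.erase s(a, b)).erase s(c, d))))) ∨
   (∃ a b c : Ext, s(a, b) ∈ G.adj ∧ G.telo c ∧
      G'.adj = insert s(a, c) (G.adj.erase s(a, b))) ∨
   (∃ a b : Ext, s(a, b) ∈ G.adj ∧ G'.adj = G.adj.erase s(a, b)) ∨
   (∃ a b : Ext, G.telo a ∧ G.telo b ∧ a ≠ b ∧ G'.adj = insert s(a, b) G.adj))

/-- A reversal: a DCJ that inverts a segment of a chromosome, i.e. a DCJ
preserving the telomeres and the distribution of markers into chromosomes. -/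
def IsReversal (G G' : Genome) : Prop :=
  IsDCJ G G' ∧ (∀ e : Ext, G.matched e ↔ G'.matched e) ∧
  ∀ e f : Ext, G.chromRel e f ↔ G'.chromRel e f

/-- `Scen R ℓ G H`: a scenario of `ℓ` operations of type `R` transforms `G` into `H`. -/
def Scen {α : Type*} (R : α → α → Prop) : ℕ → α → α → Prop
  | 0, G, H => G = H
  | n + 1, G, H => ∃ K, R G K ∧ Scen R n K H

namespace Genome

/-- The natural graph `NG(G)`, as a relation on extremities: two extremities
are related if they lie in the same adjacency (the same vertex of `NG(G)`) or
are the two endpoints of an edge of `NG(G)` (paralogous extremities with the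
same end). -/
def ngRel (G : Genome) (e f : Ext) : Prop :=
  Relation.EqvGen (fun e f => s(e, f) ∈ G.adj ∨
    (f = flipCopy e ∧ e.1 ∈ G.occs ∧ f.1 ∈ G.occs)) e f

/-- a connected component of the natural graph. -/
def IsNGClass (G : Genome) (S : Set Ext) : Prop :=
  ∃ e : Ext, e.1 ∈ G.occs ∧ S = {f | G.ngRel e f}

/-- a cycle of the natural graph: a component without telomere. -/
def IsNGCycle (G : Genome) (S : Set Ext) : Prop :=
  G.IsNGClass S ∧ ∀ e ∈ S, G.matched e

/-- a path of the natural graph: a component containing a telomere. -/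
def IsNGPath (G : Genome) (S : Set Ext) : Prop :=
  G.IsNGClass S ∧ ∃ e ∈ S, ¬ G.matched e

/-- the number of edges of a component of the natural graph. -/
noncomputable def ngEdges (G : Genome) (S : Set Ext) : ℕ :=
  Set.ncard {q : Sym2 Ext | ∃ e : Ext, q = s(e, flipCopy e) ∧
    e.1 ∈ G.occs ∧ (flipCopy e).1 ∈ G.occs ∧ e ∈ S}

/-- the number of cycles of the natural graph. -/
noncomputable def ngCycleCount (G : Genome) : ℕ :=
  Set.ncard {S : Set Ext | G.IsNGCycle S}

/-- the number of even cycles of the natural graph. -/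
noncomputable def ngEvenCycleCount (G : Genome) : ℕ :=
  Set.ncard {S : Set Ext | G.IsNGCycle S ∧ Even (G.ngEdges S)}

/-- the number of odd cycles of the natural graph. -/
noncomputable def ngOddCycleCount (G : Genome) : ℕ :=
  Set.ncard {S : Set Ext | G.IsNGCycle S ∧ Odd (G.ngEdges S)}

/-- the number of even paths of the natural graph. -/
noncomputable def ngEvenPathCount (G : Genome) : ℕ :=
  Set.ncard {S : Set Ext | G.IsNGPath S ∧ Even (G.ngEdges S)}

/-- The dedoubled adjacency graph `A(G)`, as a relation on extremities: two
extremities are related if they lie in the same adjacency (vertex of `A(G)`)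
or are the two endpoints of an edge of `A(G)` (for each marker `x`, one edge
between the head of `x` and the tail of `x̄`). -/
def daRel (G : Genome) (e f : Ext) : Prop :=
  Relation.EqvGen (fun e f => s(e, f) ∈ G.adj ∨
    (f = coFlip e ∧ e.1 ∈ G.occs ∧ f.1 ∈ G.occs)) e f

/-- an element (connected component) of the dedoubled adjacency graph. -/
def IsDAClass (G : Genome) (S : Set Ext) : Prop :=
  ∃ e : Ext, e.1 ∈ G.occs ∧ S = {f | G.daRel e f}

/-- a cycle of the dedoubled adjacency graph. -/
def IsDACycle (G : Genome) (S : Set Ext) : Prop :=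
  G.IsDAClass S ∧ ∀ e ∈ S, G.matched e

/-- a path of the dedoubled adjacency graph. -/
def IsDAPath (G : Genome) (S : Set Ext) : Prop :=
  G.IsDAClass S ∧ ∃ e ∈ S, ¬ G.matched e

end Genome

/-- the element `S` of `A(G)` contains the couple `(x, x̄)` of gene `g`
(it contains one of the two edges associated with `g`). -/
def ElemHasCouple (S : Set Ext) (g : ℕ) : Prop :=
  ∃ c h : Bool, (((g, c), h) : Ext) ∈ S

/-- the element `S` contains the couple of gene `g` twice (both of its edges). -/
def ElemHasCoupleTwice (S : Set Ext) (g : ℕ) : Prop :=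
  ∀ c h : Bool, (((g, c), h) : Ext) ∈ S

/-- a non-duplicated element of `A(G)`. -/
def NonDupElem (S : Set Ext) : Prop := ∀ g : ℕ, ¬ ElemHasCoupleTwice S g

/-- independent elements: no couple is contained in both. -/
def IndepElems (S T : Set Ext) : Prop :=
  ∀ g : ℕ, ¬ (ElemHasCouple S g ∧ ElemHasCouple T g)

/-- a family of pairwise independent non-duplicated cycles of `A(G)`. -/
def IndepCycleFam (G : Genome) (F : Finset (Set Ext)) : Prop :=
  (∀ S ∈ F, G.IsDACycle S ∧ NonDupElem S) ∧
  ∀ S ∈ F, ∀ T ∈ F, S ≠ T → IndepElems S T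

/-- a chromosome of `G`, as the set of extremities it carries. -/
def Genome.IsChrom (G : Genome) (S : Set Ext) : Prop :=
  ∃ e : Ext, e.1 ∈ G.occs ∧ S = {f | G.chromRel e f}

/-- a doubled chromosome: a chromosome globally invariant under the paralogy
map (reducible to `(x x̄)`). -/
def Genome.IsDoubledChrom (G : Genome) (S : Set Ext) : Prop :=
  G.IsChrom S ∧ flipCopy '' S = S

/-- the number of doubled chromosomes of `G`. -/
noncomputable def Genome.doubledCount (G : Genome) : ℕ :=
  Set.ncard {S : Set Ext | G.IsDoubledChrom S}

/-- A perfectly duplicated genome: totally duplicated, every adjacency is a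
double-adjacency, and no adjacency is of the form `(x −x̄)`. -/
def Genome.PerfDup (G : Genome) : Prop :=
  G.TotDup ∧ (∀ p ∈ G.adj, Sym2.map flipCopy p ∈ G.adj) ∧
  ∀ e : Ext, s(e, flipCopy e) ∉ G.adj

/-- `Gc` is obtained from the unilinear genome `G` by circularization:
its two telomeres are joined into an adjacency. -/
def Circularize (G Gc : Genome) : Prop :=
  Gc.occs = G.occs ∧ ∃ e f : Ext, G.telo e ∧ G.telo f ∧ e ≠ f ∧
    Gc.adj = insert s(e, f) G.adj

/-- a signed marker: gene id, paralog copy flag, sign (`true` = positive). -/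
abbrev Mk : Type := ℕ × Bool × Bool

def mOcc (m : Mk) : Occ := (m.1, m.2.1)

/-- right(reading)-facing extremity of a signed marker. -/
def rExt (m : Mk) : Ext := (mOcc m, m.2.2)

/-- left(reading)-facing extremity of a signed marker. -/
def lExt (m : Mk) : Ext := (mOcc m, !m.2.2)

/-- the adjacencies of a linear chromosome given by a list of signed markers. -/
def linAdj : List Mk → Finset (Sym2 Ext)
  | [] => ∅
  | [_] => ∅
  | x :: y :: t => insert s(rExt x, lExt y) (linAdj (y :: t))

def occsOf (l : List Mk) : Finset Occ := (l.map mOcc).toFinset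

/-- the unilinear genome with chromosome `(∘ l ∘)`. -/
def linGenome (l : List Mk) : Genome := ⟨occsOf l, linAdj l⟩

/-- the adjacencies of a circular chromosome given by a list of signed markers. -/
def circAdj (l : List Mk) : Finset (Sym2 Ext) :=
  match l with
  | [] => ∅
  | x :: t => insert s(rExt ((x :: t).getLast (by simp)), lExt x) (linAdj (x :: t))

/-- the unicircular genome obtained by circularizing `(∘ l ∘)`. -/
def circGenome (l : List Mk) : Genome := ⟨occsOf l, circAdj l⟩

/-- the paralogous copy of a signed marker (same gene, same sign, other copy). -/
def copyFlipM (m : Mk) : Mk := (m.1, !m.2.1, m.2.2)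

/-- A 1-tandem duplicated genome: a unilinear genome of the form `(∘ w w̄ ∘)`,
i.e. reducible to `(∘ x x̄ ∘)` by contracting runs of double-adjacencies. -/
def IsTandem (G : Genome) : Prop :=
  ∃ w : List Mk, w ≠ [] ∧ (w.map (fun m => m.1)).Nodup ∧
    G = linGenome (w ++ w.map copyFlipM)

end Rearr


namespace Rearr

@[simp] lemma flipCopy_flipCopy (e : Ext) : flipCopy (flipCopy e) = e := by
  simp [flipCopy]

namespace Genome

/-- neighbour relation in the natural graph. -/
def step (G : Genome) (e f : Ext) : Prop :=
  s(e, f) ∈ G.adj ∨ (f = flipCopy e ∧ e.1 ∈ G.occs ∧ f.1 ∈ G.occs)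

lemma step_symm (G : Genome) : Symmetric G.step := by
  intro e f h
  rcases h with h | ⟨rfl, h1, h2⟩
  · left; rwa [Sym2.eq_swap]
  · right; exact ⟨(flipCopy_flipCopy e).symm, h2, h1⟩

lemma ngRel_iff (G : Genome) {e f : Ext} :
    G.ngRel e f ↔ Relation.ReflTransGen G.step e f := by
  constructor
  · intro h
    induction h with
    | rel a b h => exact Relation.ReflTransGen.single h
    | refl a => exact Relation.ReflTransGen.refl
    | symm a b _ ih => exact (haveI : Std.Symm G.step := ⟨fun _ _ h => G.step_symm h⟩; Std.Symm.symm _ _ ih)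
    | trans a b c _ _ ih1 ih2 => exact ih1.trans ih2
  · intro h
    induction h with
    | refl => exact Relation.EqvGen.refl _
    | tail _ h2 ih => exact Relation.EqvGen.trans _ _ _ ih (Relation.EqvGen.rel _ _ h2)

lemma ngRel_refl (G : Genome) (e : Ext) : G.ngRel e e := Relation.EqvGen.refl e
lemma ngRel_symm (G : Genome) {e f : Ext} (h : G.ngRel e f) : G.ngRel f e :=
  Relation.EqvGen.symm _ _ h
lemma ngRel_trans (G : Genome) {e f g : Ext} (h1 : G.ngRel e f) (h2 : G.ngRel f g) :
    G.ngRel e g := Relation.EqvGen.trans _ _ _ h1 h2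
lemma ngRel_of_step (G : Genome) {e f : Ext} (h : G.step e f) : G.ngRel e f :=
  Relation.EqvGen.rel _ _ h

/-- the connected component of `e` in the natural graph. -/
def cls (G : Genome) (e : Ext) : Set Ext := {f | G.ngRel e f}

lemma mem_cls_self (G : Genome) (e : Ext) : e ∈ G.cls e := G.ngRel_refl e

lemma cls_closed (G : Genome) {e f g : Ext} (hf : f ∈ G.cls e) (h : G.step f g) :
    g ∈ G.cls e := G.ngRel_trans hf (G.ngRel_of_step h)

lemma cls_eq_of_mem (G : Genome) {e f : Ext} (h : f ∈ G.cls e) : G.cls e = G.cls f := by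
  ext x
  exact ⟨fun hx => G.ngRel_trans (G.ngRel_symm h) hx, fun hx => G.ngRel_trans h hx⟩

lemma class_eq_of_common {G : Genome} {S T : Set Ext} (hS : G.IsNGClass S)
    (hT : G.IsNGClass T) {x : Ext} (hxS : x ∈ S) (hxT : x ∈ T) : S = T := by
  obtain ⟨e, -, rfl⟩ := hS
  obtain ⟨f, -, rfl⟩ := hT
  rw [show {f | G.ngRel e f} = G.cls e from rfl] at hxS ⊢
  rw [show {g | G.ngRel f g} = G.cls f from rfl] at hxT ⊢
  rw [G.cls_eq_of_mem hxS, G.cls_eq_of_mem hxT]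

/-- closure of a set under `step` captures classes. -/
lemma cls_subset_of_closed (G : Genome) {e : Ext} {S : Set Ext} (he : e ∈ S)
    (hcl : ∀ f ∈ S, ∀ g, G.step f g → g ∈ S) : G.cls e ⊆ S := by
  intro x hx
  unfold cls at hx
  change G.ngRel e x at hx
  rw [ngRel_iff] at hx
  induction hx with
  | refl => exact he
  | tail _ h2 ih => exact hcl _ ih _ h2

lemma ngCycle_finite (G : Genome) : {S : Set Ext | G.IsNGCycle S}.Finite := by
  apply Set.Finite.subset
    (Set.Finite.image (fun e => G.cls e) ((G.occs ×ˢ (Finset.univ : Finset Bool)) :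
      Finset Ext).finite_toSet)
  rintro S ⟨⟨e, he, rfl⟩, -⟩
  exact ⟨e, by simp [he], rfl⟩

end Genome
end Rearr


namespace Rearr
namespace Genome

lemma sym2_exists_mem {α : Type*} (p : Sym2 α) : ∃ x, x ∈ p := by
  induction p using Sym2.ind with
  | _ u v => exact ⟨u, by simp⟩

lemma class_closed {G : Genome} {S : Set Ext} (hS : G.IsNGClass S) {f g : Ext}
    (hf : f ∈ S) (h : G.step f g) : g ∈ S := by
  obtain ⟨e, -, rfl⟩ := hS
  exact G.cls_closed hf h

variable {G G' : Genome}

/-- A cycle of `NG(G')` all of whose adjacencies are old is a cycle of `NG(G)`. -/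
lemma cycle_transfer (hG : G.WF) (hocc : G'.occs = G.occs)
    {S : Set Ext} (hS : G'.IsNGCycle S)
    (hno : ∀ p ∈ G'.adj, (∀ x ∈ p, x ∈ S) → p ∈ G.adj) :
    G.IsNGCycle S := by
  obtain ⟨⟨e, he, rfl⟩, hm⟩ := hS
  rw [show {f | G'.ngRel e f} = G'.cls e from rfl] at hm ⊢
  have h1 : ∀ f ∈ G'.cls e, ∀ g, s(f, g) ∈ G'.adj → s(f, g) ∈ G.adj := by
    intro f hf g hfg
    refine hno _ hfg ?_
    intro x hx
    rcases Sym2.mem_iff.1 hx with rfl | rfl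
    · exact hf
    · exact G'.cls_closed hf (Or.inl hfg)
  have h2 : ∀ f ∈ G'.cls e, ∀ g, G'.step f g → G.step f g := by
    intro f hf g hstep
    rcases hstep with h | ⟨h, h1', h2'⟩
    · exact Or.inl (h1 f hf g h)
    · exact Or.inr ⟨h, hocc ▸ h1', hocc ▸ h2'⟩
  have h3 : ∀ f ∈ G'.cls e, ∃ g, s(f, g) ∈ G'.adj ∧ s(f, g) ∈ G.adj := by
    intro f hf
    obtain ⟨p, hp, hfp⟩ := hm f hf
    obtain ⟨g, rfl⟩ := Sym2.mem_iff_exists.1 hfp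
    exact ⟨g, hp, h1 f hf g hp⟩
  have h4 : ∀ f ∈ G'.cls e, ∀ g, G.step f g → G'.step f g := by
    intro f hf g hstep
    rcases hstep with h | ⟨h, h1', h2'⟩
    · obtain ⟨g', hg'1, hg'2⟩ := h3 f hf
      have heq : s(f, g) = s(f, g') :=
        hG.2 _ h _ hg'2 f (Sym2.mem_mk_left f g) (Sym2.mem_mk_left f g')
      exact Or.inl (heq ▸ hg'1)
    · exact Or.inr ⟨h, hocc ▸ h1', hocc ▸ h2'⟩
  have h5 : G.cls e = G'.cls e := by
    apply Set.Subset.antisymm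
    · apply G.cls_subset_of_closed (G'.mem_cls_self e)
      intro f hf g hstep
      exact G'.cls_closed hf (h4 f hf g hstep)
    · intro x hx
      change G'.ngRel e x at hx
      rw [ngRel_iff] at hx
      induction hx with
      | refl => exact G.mem_cls_self e
      | @tail x' y' hpre hstep ih =>
        have hx'S : x' ∈ G'.cls e := by
          change G'.ngRel e x'
          rw [ngRel_iff]; exact hpre
        exact G.cls_closed ih (h2 x' hx'S _ hstep)
  constructor
  · exact ⟨e, hocc ▸ he, h5 ▸ rfl⟩
  · intro f hf
    obtain ⟨g, -, hold⟩ := h3 f hf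
    exact ⟨s(f, g), hold, Sym2.mem_mk_left f g⟩

lemma exists_new_edge (hG : G.WF) (hocc : G'.occs = G.occs)
    {S : Set Ext} (hS : G'.IsNGCycle S) (hnot : ¬ G.IsNGCycle S) :
    ∃ p, p ∈ G'.adj ∧ p ∉ G.adj ∧ ∀ x ∈ p, x ∈ S := by
  by_contra h
  push_neg at h
  refine hnot (cycle_transfer hG hocc hS ?_)
  intro p hp hall
  by_contra hn
  obtain ⟨x, hx1, hx2⟩ := h p hp hn
  exact hx2 (hall x hx1)

open Classical in
/-- The number of new cycles is at most the number of new adjacencies. -/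
lemma new_cycles_le (hG : G.WF) (hocc : G'.occs = G.occs) :
    ({S : Set Ext | G'.IsNGCycle S} \ {S : Set Ext | G.IsNGCycle S}).ncard ≤
      (G'.adj \ G.adj).card := by
  classical
  rw [← Set.ncard_coe_finset]
  apply Set.ncard_le_ncard_of_injOn
    (fun S => if h : ∃ p, p ∈ G'.adj ∧ p ∉ G.adj ∧ ∀ x ∈ p, x ∈ S then h.choose
      else s(default, default))
  · rintro S ⟨hS', hSn⟩
    have hex := exists_new_edge hG hocc hS' hSn
    simp only [dif_pos hex]
    simp only [Finset.coe_sdiff, Set.mem_diff, Finset.mem_coe]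
    exact ⟨hex.choose_spec.1, hex.choose_spec.2.1⟩
  · rintro S ⟨hS', hSn⟩ T ⟨hT', hTn⟩ heq
    have hexS := exists_new_edge hG hocc hS' hSn
    have hexT := exists_new_edge hG hocc hT' hTn
    simp only [dif_pos hexS, dif_pos hexT] at heq
    obtain ⟨x, hx⟩ := sym2_exists_mem hexS.choose
    have hxS : x ∈ S := hexS.choose_spec.2.2 x hx
    have hxT : x ∈ T := hexT.choose_spec.2.2 x (heq ▸ hx)
    exact class_eq_of_common hS'.1 hT'.1 hxS hxT

lemma ngCycleCount_eq (G : Genome) :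
    G.ngCycleCount = {S : Set Ext | G.IsNGCycle S}.ncard := rfl

lemma count_split (G G' : Genome) :
    G'.ngCycleCount ≤ ({S : Set Ext | G'.IsNGCycle S} ∩ {S : Set Ext | G.IsNGCycle S}).ncard +
      ({S : Set Ext | G'.IsNGCycle S} \ {S : Set Ext | G.IsNGCycle S}).ncard := by
  have h := Set.ncard_union_le
    ({S : Set Ext | G'.IsNGCycle S} ∩ {S : Set Ext | G.IsNGCycle S})
    ({S : Set Ext | G'.IsNGCycle S} \ {S : Set Ext | G.IsNGCycle S})
  rw [Set.inter_union_diff] at h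
  rw [ngCycleCount_eq]
  exact h

lemma count_le_of_new (hG : G.WF) (hocc : G'.occs = G.occs) :
    G'.ngCycleCount ≤ G.ngCycleCount + (G'.adj \ G.adj).card := by
  refine (count_split G G').trans ?_
  gcongr
  · rw [ngCycleCount_eq]
    exact Set.ncard_le_ncard Set.inter_subset_right G.ngCycle_finite
  · exact new_cycles_le hG hocc

end Genome
end Rearr


namespace Rearr
namespace Genome

variable {G G' : Genome}

/-- core argument: two distinct new cycles force the destruction of an old cycle. -/
lemma form1_core (hG : G.WF) (hocc : G'.occs = G.occs)
    {a b c d : Ext} (hab : s(a, b) ∈ G.adj) (hcd : s(c, d) ∈ G.adj)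
    (hsub : ∀ p ∈ G'.adj, p ∈ G.adj ∨ p = s(a, c) ∨ p = s(b, d))
    (herase : ∀ p ∈ G.adj, p ∉ G'.adj → p = s(a, b) ∨ p = s(c, d))
    {K1 K2 : Set Ext} (hK1 : G'.IsNGCycle K1) (hK2 : G'.IsNGCycle K2) (hK12 : K1 ≠ K2)
    (ha : a ∈ K1) (hc : c ∈ K1) (hb : b ∈ K2) (hd : d ∈ K2) :
    ∃ Z, G.IsNGCycle Z ∧ ¬ G'.IsNGCycle Z := by
  have hmatch : ∀ f ∈ K1 ∪ K2, G.matched f := by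
    intro f hf
    have hf' : G'.matched f := by
      rcases hf with hf | hf
      · exact hK1.2 f hf
      · exact hK2.2 f hf
    obtain ⟨p, hp, hfp⟩ := hf'
    rcases hsub p hp with hold | rfl | rfl
    · exact ⟨p, hold, hfp⟩
    · rcases Sym2.mem_iff.1 hfp with rfl | rfl
      · exact ⟨s(f, b), hab, Sym2.mem_mk_left f b⟩
      · exact ⟨s(f, d), hcd, Sym2.mem_mk_left f d⟩
    · rcases Sym2.mem_iff.1 hfp with rfl | rfl
      · exact ⟨s(a, f), hab, Sym2.mem_mk_right a f⟩
      · exact ⟨s(c, f), hcd, Sym2.mem_mk_right c f⟩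
  have hclosed : ∀ f ∈ K1 ∪ K2, ∀ g, G.step f g → g ∈ K1 ∪ K2 := by
    intro f hf g hstep
    rcases hstep with h | ⟨h1, h2, h3⟩
    · by_cases hG' : s(f, g) ∈ G'.adj
      · rcases hf with hf | hf
        · exact Or.inl (class_closed hK1.1 hf (Or.inl hG'))
        · exact Or.inr (class_closed hK2.1 hf (Or.inl hG'))
      · rcases herase _ h hG' with heq | heq <;>
        · rcases Sym2.eq_iff.1 heq with ⟨rfl, rfl⟩ | ⟨rfl, rfl⟩ <;>
            simp [ha, hb, hc, hd]
    · have hstep' : G'.step f g := Or.inr ⟨h1, hocc.symm ▸ h2, hocc.symm ▸ h3⟩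
      rcases hf with hf | hf
      · exact Or.inl (class_closed hK1.1 hf hstep')
      · exact Or.inr (class_closed hK2.1 hf hstep')
  refine ⟨G.cls a, ⟨⟨a, hG.1 _ hab a (Sym2.mem_mk_left a b), rfl⟩, ?_⟩, ?_⟩
  · intro f hf
    exact hmatch f (G.cls_subset_of_closed (Or.inl ha) hclosed hf)
  · intro hZ'
    have hZK1 : G.cls a = K1 :=
      class_eq_of_common hZ'.1 hK1.1 (G.mem_cls_self a) ha
    have hbZ : b ∈ G.cls a := G.cls_closed (G.mem_cls_self a) (Or.inl hab)
    exact hK12 (class_eq_of_common hK1.1 hK2.1 (hZK1 ▸ hbZ) hb)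

/-- sharp bound for the first (non-degenerate) form of DCJ. -/
lemma count_form1 (hG : G.WF) (hocc : G'.occs = G.occs)
    {a b c d : Ext} (hab : s(a, b) ∈ G.adj) (hcd : s(c, d) ∈ G.adj)
    (hadj' : G'.adj = insert s(a, c) (insert s(b, d)
      ((G.adj.erase s(a, b)).erase s(c, d)))) :
    G'.ngCycleCount ≤ G.ngCycleCount + 1 := by
  classical
  have hdiff : G'.adj \ G.adj ⊆ {s(a, c), s(b, d)} := by
    intro p hp
    rw [Finset.mem_sdiff, hadj'] at hp
    obtain ⟨hp1, hp2⟩ := hp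
    simp only [Finset.mem_insert, Finset.mem_erase] at hp1
    rcases hp1 with rfl | rfl | ⟨-, -, hmem⟩
    · simp
    · simp
    · exact absurd hmem hp2
  by_cases hsmall : (G'.adj \ G.adj).card ≤ 1
  · exact (count_le_of_new hG hocc).trans (by omega)
  push_neg at hsmall
  have hle2 : (G'.adj \ G.adj).card ≤ 2 := by
    refine (Finset.card_le_card hdiff).trans ?_
    refine (Finset.card_insert_le _ _).trans ?_
    simp
  have hcard2 : (G'.adj \ G.adj).card = 2 := by omega
  have hdiffeq : G'.adj \ G.adj = {s(a, c), s(b, d)} := by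
    apply Finset.eq_of_subset_of_card_le hdiff
    rw [hcard2]
    refine (Finset.card_insert_le _ _).trans ?_
    simp
  have hacmem : s(a, c) ∈ G'.adj ∧ s(a, c) ∉ G.adj := by
    have : s(a, c) ∈ G'.adj \ G.adj := hdiffeq ▸ (by simp)
    exact Finset.mem_sdiff.1 this
  have hbdmem : s(b, d) ∈ G'.adj ∧ s(b, d) ∉ G.adj := by
    have : s(b, d) ∈ G'.adj \ G.adj := hdiffeq ▸ (by simp)
    exact Finset.mem_sdiff.1 this
  have hBle : ({S : Set Ext | G'.IsNGCycle S} \ {S : Set Ext | G.IsNGCycle S}).ncard ≤ 2 :=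
    (new_cycles_le hG hocc).trans (by omega)
  by_cases hBsmall :
      ({S : Set Ext | G'.IsNGCycle S} \ {S : Set Ext | G.IsNGCycle S}).ncard ≤ 1
  · refine (count_split G G').trans ?_
    have h1 : ({S : Set Ext | G'.IsNGCycle S} ∩ {S : Set Ext | G.IsNGCycle S}).ncard ≤
        G.ngCycleCount := Set.ncard_le_ncard Set.inter_subset_right G.ngCycle_finite
    omega
  push_neg at hBsmall
  have hBfin : ({S : Set Ext | G'.IsNGCycle S} \ {S : Set Ext | G.IsNGCycle S}).Finite :=
    G'.ngCycle_finite.diff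
  obtain ⟨S, T, hS, hT, hST⟩ := (Set.one_lt_ncard_iff hBfin).1 hBsmall
  obtain ⟨hS', hSn⟩ := hS
  obtain ⟨hT', hTn⟩ := hT
  obtain ⟨pS, hpS1, hpS2, hpS3⟩ := exists_new_edge hG hocc hS' hSn
  obtain ⟨pT, hpT1, hpT2, hpT3⟩ := exists_new_edge hG hocc hT' hTn
  have hpSd : pS ∈ ({s(a, c), s(b, d)} : Finset (Sym2 Ext)) :=
    hdiff (Finset.mem_sdiff.2 ⟨hpS1, hpS2⟩)
  have hpTd : pT ∈ ({s(a, c), s(b, d)} : Finset (Sym2 Ext)) :=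
    hdiff (Finset.mem_sdiff.2 ⟨hpT1, hpT2⟩)
  have hpST : pS ≠ pT := by
    rintro rfl
    obtain ⟨x, hx⟩ := sym2_exists_mem pS
    exact hST (class_eq_of_common hS'.1 hT'.1 (hpS3 x hx) (hpT3 x hx))
  have hsub : ∀ p ∈ G'.adj, p ∈ G.adj ∨ p = s(a, c) ∨ p = s(b, d) := by
    intro p hp
    rw [hadj'] at hp
    simp only [Finset.mem_insert, Finset.mem_erase] at hp
    tauto
  have herase : ∀ p ∈ G.adj, p ∉ G'.adj → p = s(a, b) ∨ p = s(c, d) := by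
    intro p hp hp'
    rw [hadj'] at hp'
    simp only [Finset.mem_insert, Finset.mem_erase] at hp'
    push_neg at hp'
    by_contra hcon
    push_neg at hcon
    tauto
  -- identify the two new cycles
  have hmain : ∃ Z, G.IsNGCycle Z ∧ ¬ G'.IsNGCycle Z := by
    simp only [Finset.mem_insert, Finset.mem_singleton] at hpSd hpTd
    rcases hpSd with rfl | rfl
    · have hpT : pT = s(b, d) := by tauto
      subst hpT
      exact form1_core hG hocc hab hcd hsub herase hS' hT' hST
        (hpS3 a (Sym2.mem_mk_left a c)) (hpS3 c (Sym2.mem_mk_right a c))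
        (hpT3 b (Sym2.mem_mk_left b d)) (hpT3 d (Sym2.mem_mk_right b d))
    · have hpT : pT = s(a, c) := by tauto
      subst hpT
      exact form1_core hG hocc hab hcd hsub herase hT' hS' hST.symm
        (hpT3 a (Sym2.mem_mk_left a c)) (hpT3 c (Sym2.mem_mk_right a c))
        (hpS3 b (Sym2.mem_mk_left b d)) (hpS3 d (Sym2.mem_mk_right b d))
  obtain ⟨Z, hZ, hZn⟩ := hmain
  have hZmem : Z ∈ {S : Set Ext | G.IsNGCycle S} := hZ
  have hAle : ({S : Set Ext | G'.IsNGCycle S} ∩ {S : Set Ext | G.IsNGCycle S}).ncard ≤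
      ({S : Set Ext | G.IsNGCycle S} \ {Z}).ncard := by
    apply Set.ncard_le_ncard _ G.ngCycle_finite.diff
    rintro W ⟨hW1, hW2⟩
    refine ⟨hW2, ?_⟩
    rintro rfl
    exact hZn hW1
  have hCZ : ({S : Set Ext | G.IsNGCycle S} \ {Z}).ncard = G.ngCycleCount - 1 := by
    rw [ngCycleCount_eq]
    simp [Set.ncard_diff_singleton_of_mem hZmem]
  have hCpos : 1 ≤ G.ngCycleCount := by
    rw [ngCycleCount_eq]
    have := Set.ncard_pos G.ngCycle_finite |>.2 ⟨Z, hZmem⟩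
    omega
  have := count_split G G'
  omega

/-- each DCJ increases the number of cycles of the natural graph by at most one. -/
lemma count_dcj (h : IsDCJ G G') :
    G'.ngCycleCount ≤ G.ngCycleCount + 1 ∧ G'.occs = G.occs := by
  classical
  obtain ⟨hG, hG', hoccs, hforms⟩ := h
  have hocc : G'.occs = G.occs := hoccs.symm
  refine ⟨?_, hocc⟩
  rcases hforms with ⟨a, b, c, d, hab, hcd, hne, hadj' | hadj'⟩ | ⟨a, b, c, hab, htel, hadj'⟩
    | ⟨a, b, hab, hadj'⟩ | ⟨a, b, ht1, ht2, hne, hadj'⟩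
  · exact count_form1 hG hocc hab hcd hadj'
  · have hcd' : s(d, c) ∈ G.adj := by rwa [Sym2.eq_swap]
    refine count_form1 hG hocc hab hcd' ?_
    rwa [Sym2.eq_swap (a := d) (b := c)]
  · -- telomere form
    have hdiff : G'.adj \ G.adj ⊆ {s(a, c)} := by
      intro p hp
      rw [Finset.mem_sdiff, hadj'] at hp
      obtain ⟨h1, h2⟩ := hp
      rcases Finset.mem_insert.1 h1 with rfl | hm
      · simp
      · exact absurd (Finset.mem_of_mem_erase hm) h2
    have hc := Finset.card_le_card hdiff
    simp only [Finset.card_singleton] at hc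
    have := count_le_of_new hG hocc
    omega
  · -- pure cut
    have hdiff : G'.adj \ G.adj = ∅ := by
      rw [Finset.sdiff_eq_empty_iff_subset, hadj']
      exact Finset.erase_subset _ _
    have := count_le_of_new hG hocc
    rw [hdiff] at this
    simp at this
    omega
  · -- pure join
    have hdiff : G'.adj \ G.adj ⊆ {s(a, b)} := by
      intro p hp
      rw [Finset.mem_sdiff, hadj'] at hp
      obtain ⟨h1, h2⟩ := hp
      rcases Finset.mem_insert.1 h1 with rfl | hm
      · simp
      · exact absurd hm h2
    have hc := Finset.card_le_card hdiff
    simp only [Finset.card_singleton] at hc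
    have := count_le_of_new hG hocc
    omega

end Genome
end Rearr


namespace Rearr

lemma scen_bound : ∀ (ℓ : ℕ) (G H : Genome), Scen IsDCJ ℓ G H →
    H.occs = G.occs ∧ H.ngCycleCount ≤ G.ngCycleCount + ℓ := by
  intro ℓ
  induction ℓ with
  | zero =>
    intro G H h
    have hGH : G = H := h
    subst hGH
    exact ⟨rfl, le_refl _⟩
  | succ n ih =>
    intro G H h
    obtain ⟨K, hGK, hK⟩ := h
    have h1 := Genome.count_dcj hGK
    have h2 := ih K H hK
    exact ⟨h2.1.trans h1.2, by omega⟩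

@[simp] lemma copyFlipM_copyFlipM (m : Mk) : copyFlipM (copyFlipM m) = m := by
  simp [copyFlipM]

lemma flipCopy_rExt (m : Mk) : flipCopy (rExt m) = rExt (copyFlipM m) := rfl
lemma flipCopy_lExt (m : Mk) : flipCopy (lExt m) = lExt (copyFlipM m) := rfl

lemma mem_linAdj : ∀ {l : List Mk} {p : Sym2 Ext}, (p ∈ linAdj l ↔
    ∃ i : ℕ, ∃ h : i + 1 < l.length, p = s(rExt (l[i]'(by omega)), lExt (l[i + 1]'h)))
  | [], p => by
    simp only [linAdj, Finset.notMem_empty, false_iff]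
    rintro ⟨i, h, -⟩
    simp at h
  | [x], p => by
    simp only [linAdj, Finset.notMem_empty, false_iff]
    rintro ⟨i, h, -⟩
    simp at h
  | x :: y :: t, p => by
    rw [linAdj, Finset.mem_insert, mem_linAdj (l := y :: t)]
    constructor
    · rintro (rfl | ⟨i, h, rfl⟩)
      · exact ⟨0, by simp [Nat.succ_lt_succ], rfl⟩
      · exact ⟨i + 1, by simpa using Nat.succ_lt_succ h, by simp⟩
    · rintro ⟨i, h, rfl⟩
      match i with
      | 0 => exact Or.inl rfl
      | Nat.succ j =>
        refine Or.inr ⟨j, by simpa using Nat.lt_of_succ_lt_succ h, by simp⟩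

lemma occ_index_inj {l : List Mk} (hnd : (l.map mOcc).Nodup) {i j : ℕ}
    (hi : i < l.length) (hj : j < l.length) (h : mOcc (l[i]'hi) = mOcc (l[j]'hj)) :
    i = j := by
  have h' : (l.map mOcc)[i]'(by simpa) = (l.map mOcc)[j]'(by simpa) := by
    simpa [List.getElem_map] using h
  exact (List.Nodup.getElem_inj_iff hnd).1 h'

lemma adj_at_r {l : List Mk} (hnd : (l.map mOcc).Nodup) {i : ℕ} (hi : i < l.length)
    {q : Sym2 Ext} (hq : q ∈ linAdj l) (he : rExt (l[i]'hi) ∈ q) :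
    ∃ h : i + 1 < l.length, q = s(rExt (l[i]'hi), lExt (l[i + 1]'h)) := by
  obtain ⟨j, hj, rfl⟩ := mem_linAdj.1 hq
  rcases Sym2.mem_iff.1 he with heq | heq
  · have hocc : mOcc (l[i]'hi) = mOcc (l[j]'(by omega)) := congrArg Prod.fst heq
    have hij : i = j := occ_index_inj hnd hi (by omega) hocc
    subst hij
    exact ⟨hj, rfl⟩
  · exfalso
    have hocc : mOcc (l[i]'hi) = mOcc (l[j + 1]'hj) := congrArg Prod.fst heq
    have hij : i = j + 1 := occ_index_inj hnd hi hj hocc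
    subst hij
    have hsnd := congrArg Prod.snd heq
    simp only [rExt, lExt] at hsnd
    simp at hsnd

lemma adj_at_l {l : List Mk} (hnd : (l.map mOcc).Nodup) {i : ℕ} (hi : i + 1 < l.length)
    {q : Sym2 Ext} (hq : q ∈ linAdj l) (he : lExt (l[i + 1]'hi) ∈ q) :
    q = s(rExt (l[i]'(by omega)), lExt (l[i + 1]'hi)) := by
  obtain ⟨j, hj, rfl⟩ := mem_linAdj.1 hq
  rcases Sym2.mem_iff.1 he with heq | heq
  · exfalso
    have hocc : mOcc (l[i + 1]'hi) = mOcc (l[j]'(by omega)) := congrArg Prod.fst heq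
    have hij : i + 1 = j := occ_index_inj hnd hi (by omega) hocc
    subst hij
    have hsnd := congrArg Prod.snd heq
    simp only [rExt, lExt] at hsnd
    simp at hsnd
  · have hocc : mOcc (l[i + 1]'hi) = mOcc (l[j + 1]'hj) := congrArg Prod.fst heq
    have hij : i + 1 = j + 1 := occ_index_inj hnd hi hj hocc
    have hij' : i = j := by omega
    subst hij'
    rfl

lemma mOcc_mem_occsOf {l : List Mk} {j : ℕ} (hj : j < l.length) :
    mOcc (l[j]'hj) ∈ occsOf l :=
  List.mem_toFinset.2 (List.mem_map.2 ⟨l[j]'hj, List.getElem_mem hj, rfl⟩)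

/-- each pair of paralogous consecutive adjacencies forms a cycle of `NG`. -/
lemma linGenome_cycle {l : List Mk} (hnd : (l.map mOcc).Nodup)
    {i k : ℕ} (hi : i + 1 < l.length) (hk : k + 1 < l.length)
    (hf1 : copyFlipM (l[i]'(by omega)) = l[k]'(by omega))
    (hf2 : copyFlipM (l[i + 1]'hi) = l[k + 1]'hk) :
    (linGenome l).IsNGCycle
      ({rExt (l[i]'(by omega)), lExt (l[i + 1]'hi),
        rExt (l[k]'(by omega)), lExt (l[k + 1]'hk)} : Set Ext) := by
  set G := linGenome l with hG
  have hadjG : G.adj = linAdj l := rfl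
  have hoccG : G.occs = occsOf l := rfl
  have hA1 : s(rExt (l[i]'(by omega)), lExt (l[i + 1]'hi)) ∈ G.adj :=
    mem_linAdj.2 ⟨i, hi, rfl⟩
  have hA2 : s(rExt (l[k]'(by omega)), lExt (l[k + 1]'hk)) ∈ G.adj :=
    mem_linAdj.2 ⟨k, hk, rfl⟩
  have hs1 : G.step (rExt (l[i]'(by omega))) (rExt (l[k]'(by omega))) := by
    refine Or.inr ⟨?_, mOcc_mem_occsOf _, mOcc_mem_occsOf _⟩
    rw [flipCopy_rExt, hf1]
  have hs2 : G.step (lExt (l[i + 1]'hi)) (lExt (l[k + 1]'hk)) := by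
    refine Or.inr ⟨?_, mOcc_mem_occsOf _, mOcc_mem_occsOf _⟩
    rw [flipCopy_lExt, hf2]
  have hs1' : G.step (rExt (l[k]'(by omega))) (rExt (l[i]'(by omega))) := G.step_symm hs1
  have hs2' : G.step (lExt (l[k + 1]'hk)) (lExt (l[i + 1]'hi)) := G.step_symm hs2
  set e := rExt (l[i]'(show i < l.length by omega)) with he
  have m1 : e ∈ G.cls e := G.mem_cls_self e
  have m2 : lExt (l[i + 1]'hi) ∈ G.cls e := G.cls_closed m1 (Or.inl hA1)
  have m3 : rExt (l[k]'(show k < l.length by omega)) ∈ G.cls e := G.cls_closed m1 hs1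
  have m4 : lExt (l[k + 1]'hk) ∈ G.cls e := G.cls_closed m2 hs2
  have hsub1 : ({rExt (l[i]'(by omega)), lExt (l[i + 1]'hi),
      rExt (l[k]'(by omega)), lExt (l[k + 1]'hk)} : Set Ext) ⊆ G.cls e := by
    intro x hx
    rcases hx with rfl | rfl | rfl | rfl
    · exact m1
    · exact m2
    · exact m3
    · exact m4
  have hsub2 : G.cls e ⊆ ({rExt (l[i]'(by omega)), lExt (l[i + 1]'hi),
      rExt (l[k]'(by omega)), lExt (l[k + 1]'hk)} : Set Ext) := by
    apply G.cls_subset_of_closed (by left; rfl)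
    intro f hf g hstep
    simp only [Set.mem_insert_iff, Set.mem_singleton_iff] at hf ⊢
    rcases hstep with hadj | ⟨rfl, -, -⟩
    · rw [hadjG] at hadj
      rcases hf with rfl | rfl | rfl | rfl
      · obtain ⟨h', hq⟩ := adj_at_r hnd (by omega) hadj (Sym2.mem_mk_left _ _)
        rcases Sym2.eq_iff.1 hq with ⟨-, rfl⟩ | ⟨-, rfl⟩
        · exact Or.inr (Or.inl rfl)
        · exact Or.inl rfl
      · have hq := adj_at_l hnd hi hadj (Sym2.mem_mk_left _ _)
        rcases Sym2.eq_iff.1 hq with ⟨-, rfl⟩ | ⟨-, rfl⟩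
        · exact Or.inr (Or.inl rfl)
        · exact Or.inl rfl
      · obtain ⟨h', hq⟩ := adj_at_r hnd (by omega) hadj (Sym2.mem_mk_left _ _)
        rcases Sym2.eq_iff.1 hq with ⟨-, rfl⟩ | ⟨-, rfl⟩
        · exact Or.inr (Or.inr (Or.inr rfl))
        · exact Or.inr (Or.inr (Or.inl rfl))
      · have hq := adj_at_l hnd hk hadj (Sym2.mem_mk_left _ _)
        rcases Sym2.eq_iff.1 hq with ⟨-, rfl⟩ | ⟨-, rfl⟩
        · exact Or.inr (Or.inr (Or.inr rfl))
        · exact Or.inr (Or.inr (Or.inl rfl))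
    · rcases hf with rfl | rfl | rfl | rfl
      · refine Or.inr (Or.inr (Or.inl ?_))
        rw [flipCopy_rExt, hf1]
      · refine Or.inr (Or.inr (Or.inr ?_))
        rw [flipCopy_lExt, hf2]
      · refine Or.inl ?_
        rw [flipCopy_rExt, ← hf1, copyFlipM_copyFlipM]
      · refine Or.inr (Or.inl ?_)
        rw [flipCopy_lExt, ← hf2, copyFlipM_copyFlipM]
  constructor
  · exact ⟨e, mOcc_mem_occsOf _, Set.Subset.antisymm hsub1 hsub2⟩
  · intro f hf
    rcases hf with rfl | rfl | rfl | rfl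
    · exact ⟨_, hA1, Sym2.mem_mk_left _ _⟩
    · exact ⟨_, hA1, Sym2.mem_mk_right _ _⟩
    · exact ⟨_, hA2, Sym2.mem_mk_left _ _⟩
    · exact ⟨_, hA2, Sym2.mem_mk_right _ _⟩

end Rearr


namespace Rearr

lemma tandem_occ_nodup (w : List Mk) (hnod : (w.map (fun m => m.1)).Nodup) :
    ((w ++ w.map copyFlipM).map mOcc).Nodup := by
  rw [List.map_append, List.map_map]
  have h1 : (w.map mOcc).Nodup := by
    apply List.Nodup.of_map Prod.fst
    rw [List.map_map]
    exact hnod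
  have h2 : (w.map (mOcc ∘ copyFlipM)).Nodup := by
    apply List.Nodup.of_map Prod.fst
    rw [List.map_map]
    exact hnod
  refine List.Nodup.append h1 h2 ?_
  intro x hx1 hx2
  obtain ⟨u, hu, rfl⟩ := List.mem_map.1 hx1
  obtain ⟨v, hv, hveq⟩ := List.mem_map.1 hx2
  have hgene : v.1 = u.1 := (Prod.ext_iff.1 hveq).1
  have huv : v = u := List.inj_on_of_nodup_map hnod hv hu hgene
  subst huv
  have hsnd := congrArg (fun o : Occ => o.2) hveq
  simp [mOcc, copyFlipM] at hsnd

lemma tandem_flip_lo (w : List Mk) {i : ℕ} (hi : i < w.length) :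
    copyFlipM ((w ++ w.map copyFlipM)[i]'(by simp; omega)) =
      (w ++ w.map copyFlipM)[w.length + i]'(by simp; omega) := by
  rw [List.getElem_append_left hi, List.getElem_append_right (by omega)]
  have hidx : w.length + i - w.length = i := by omega
  simp [hidx]

/-- the `i`-th 4-element candidate cycle of the tandem genome. -/
def tandemF (w : List Mk) (j : ℕ) : Set Ext :=
  {rExt ((w ++ w.map copyFlipM).getD j default),
   lExt ((w ++ w.map copyFlipM).getD (j + 1) default),
   rExt ((w ++ w.map copyFlipM).getD (w.length + j) default),
   lExt ((w ++ w.map copyFlipM).getD (w.length + j + 1) default)}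

lemma tandem_count (w : List Mk) (hnod : (w.map (fun m => m.1)).Nodup) :
    w.length - 1 ≤ (linGenome (w ++ w.map copyFlipM)).ngCycleCount := by
  classical
  rcases Nat.lt_or_ge w.length 2 with h2 | h2
  · have h0 : w.length - 1 = 0 := by omega
    rw [h0]
    exact Nat.zero_le _
  have hnd := tandem_occ_nodup w hnod
  have hlen : (w ++ w.map copyFlipM).length = w.length + w.length := by simp
  have hcycF : ∀ j : ℕ, j + 1 < w.length →
      (linGenome (w ++ w.map copyFlipM)).IsNGCycle (tandemF w j) := by
    intro j hj
    have h1 : j < (w ++ w.map copyFlipM).length := by omega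
    have hb2 : j + 1 < (w ++ w.map copyFlipM).length := by omega
    have h3 : w.length + j < (w ++ w.map copyFlipM).length := by omega
    have h4 : w.length + j + 1 < (w ++ w.map copyFlipM).length := by omega
    rw [tandemF, List.getD_eq_getElem _ _ h1, List.getD_eq_getElem _ _ hb2,
      List.getD_eq_getElem _ _ h3, List.getD_eq_getElem _ _ h4]
    exact linGenome_cycle hnd (i := j) (k := w.length + j) hb2 h4
      (tandem_flip_lo w (by omega)) (tandem_flip_lo w hj)
  have hinj : ∀ j1 j2 : ℕ, j1 + 1 < w.length → j2 + 1 < w.length →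
      tandemF w j1 = tandemF w j2 → j1 = j2 := by
    intro j1 j2 hj1 hj2 heq
    have h1 : j1 < (w ++ w.map copyFlipM).length := by omega
    have h1' : j2 < (w ++ w.map copyFlipM).length := by omega
    have hb2 : j2 + 1 < (w ++ w.map copyFlipM).length := by omega
    have h3 : w.length + j2 < (w ++ w.map copyFlipM).length := by omega
    have h4 : w.length + j2 + 1 < (w ++ w.map copyFlipM).length := by omega
    have hmem : rExt ((w ++ w.map copyFlipM)[j1]'h1) ∈ tandemF w j2 := by
      rw [← heq, tandemF, List.getD_eq_getElem _ _ h1]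
      exact Or.inl rfl
    rw [tandemF, List.getD_eq_getElem _ _ h1', List.getD_eq_getElem _ _ hb2,
      List.getD_eq_getElem _ _ h3, List.getD_eq_getElem _ _ h4] at hmem
    rcases hmem with heq' | heq' | heq' | heq'
    · exact occ_index_inj hnd h1 h1' (congrArg Prod.fst heq')
    · exfalso
      have hij : j1 = j2 + 1 := occ_index_inj hnd h1 hb2 (congrArg Prod.fst heq')
      subst hij
      have hsnd := congrArg Prod.snd heq'
      simp only [rExt, lExt] at hsnd
      simp at hsnd
    · exfalso
      have hij : j1 = w.length + j2 := occ_index_inj hnd h1 h3 (congrArg Prod.fst heq')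
      omega
    · exfalso
      have hij : j1 = w.length + j2 + 1 := occ_index_inj hnd h1 h4 (congrArg Prod.fst heq')
      omega
  have hinj' : Set.InjOn (tandemF w) ↑(Finset.range (w.length - 1)) := by
    intro j1 hj1 j2 hj2 heq
    simp only [Finset.coe_range, Set.mem_Iio] at hj1 hj2
    exact hinj j1 j2 (by omega) (by omega) heq
  have hsub : tandemF w '' ↑(Finset.range (w.length - 1)) ⊆
      {S : Set Ext | (linGenome (w ++ w.map copyFlipM)).IsNGCycle S} := by
    rintro S ⟨j, hjmem, rfl⟩
    simp only [Finset.coe_range, Set.mem_Iio] at hjmem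
    exact hcycF j (by omega)
  calc w.length - 1 = (↑(Finset.range (w.length - 1)) : Set ℕ).ncard := by
        rw [Set.ncard_coe_finset, Finset.card_range]
    _ = (tandemF w '' ↑(Finset.range (w.length - 1))).ncard :=
        (Set.ncard_image_of_injOn hinj').symm
    _ ≤ (linGenome (w ++ w.map copyFlipM)).ngCycleCount := by
        rw [Genome.ngCycleCount_eq]
        exact Set.ncard_le_ncard hsub (linGenome (w ++ w.map copyFlipM)).ngCycle_finite

lemma tandem_numGenes (w : List Mk) (hnod : (w.map (fun m => m.1)).Nodup) :
    (linGenome (w ++ w.map copyFlipM)).numGenes = w.length := by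
  classical
  have himg : ((linGenome (w ++ w.map copyFlipM)).occs).image Prod.fst =
      (w.map (fun m => m.1)).toFinset := by
    ext g
    constructor
    · intro hg
      obtain ⟨o, ho, rfl⟩ := Finset.mem_image.1 hg
      obtain ⟨m, hm, rfl⟩ := List.mem_map.1 (List.mem_toFinset.1 ho)
      rcases List.mem_append.1 hm with hmw | hmc
      · exact List.mem_toFinset.2 (List.mem_map.2 ⟨m, hmw, rfl⟩)
      · obtain ⟨m', hm', rfl⟩ := List.mem_map.1 hmc
        exact List.mem_toFinset.2 (List.mem_map.2 ⟨m', hm', rfl⟩)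
    · intro hg
      obtain ⟨m, hm, rfl⟩ := List.mem_map.1 (List.mem_toFinset.1 hg)
      refine Finset.mem_image.2 ⟨mOcc m, ?_, rfl⟩
      exact List.mem_toFinset.2 (List.mem_map.2 ⟨m, List.mem_append.2 (Or.inl hm), rfl⟩)
  rw [Genome.numGenes, himg, List.toFinset_card_of_nodup hnod, List.length_map]

end Rearr

namespace Rearr

/-- Lower bound on the DCJ 1-tandem halving distance of a totally duplicated
genome `G` consisting of a single linear chromosome with `n` distinct markers:
`d^t_DCJ(G) ≥ n − C − 1` where `C` is the number of cycles of the natural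
graph `NG(G)`. -/
theorem tandem_halving_dcj_lowerbound (G : Genome) (hwf : G.WF)
    (htd : G.TotDup) (huni : G.Unilinear)
    (n C d : ℕ) (hn : n = G.numGenes) (hC : C = G.ngCycleCount)
    (hd : IsLeast {ℓ : ℕ | ∃ H : Genome, IsTandem H ∧ Scen IsDCJ ℓ G H} d) :
    n - C - 1 ≤ d := by
  obtain ⟨⟨H, hH, hscen⟩, -⟩ := hd
  obtain ⟨w, hwne, hnod, rfl⟩ := hH
  have hsc := scen_bound d G _ hscen
  have hnum : (linGenome (w ++ w.map copyFlipM)).numGenes = G.numGenes := by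
    unfold Genome.numGenes
    rw [hsc.1]
  have hlen : w.length = n := by
    rw [hn, ← hnum, tandem_numGenes w hnod]
  have hcyc := tandem_count w hnod
  have hle := hsc.2
  rw [hC] at *
  omega

end Rearr
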